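/- (Sharpness of the radius (K+1)/(5K+1).) Fix k ∈ [0,1) and λ ∈ ℂ with |λ| < 1. Let φ(z) = h(z) = 1/(1−z) = ∑_{n=0}^∞ z^n and g(z) = kλ·z/(1−z) = ∑_{n=1}^∞ kλ z^n on 𝔻. Then φ is univalent with convex image, h ≺ φ, |g'(z)| ≤ k|h'(z)| on 𝔻, dist(φ(0), ∂φ(𝔻)) = 1/2, and for every r ∈ (0,1), ∑_{n=1}^∞ (|a_n| + |b_n|) r^n = (1 + k|λ|)·r/(1−r); in particular this sum exceeds 1/2 whenever 1/(3+2k|λ|) < r < 1. -/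

import Mathlib

open Complex Metric Set

noncomputable section

/-- The open unit disk in the complex plane. -/
def unitDisk : Set ℂ := Metric.ball 0 1

/-- `h` is subordinate to `φ` on the unit disk: `h = φ ∘ ω` for some analytic
self-map `ω` of the unit disk fixing the origin. -/
def Subordinate (h φ : ℂ → ℂ) : Prop :=
  ∃ ω : ℂ → ℂ, AnalyticOnNhd ℂ ω unitDisk ∧ ω 0 = 0 ∧
    Set.MapsTo ω unitDisk unitDisk ∧ ∀ z ∈ unitDisk, h z = φ (ω z)

lemma aux_image_eq : (fun z : ℂ => (1 - z)⁻¹) '' unitDisk = {w : ℂ | 1/2 < w.re} := by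
  ext w
  constructor
  · rintro ⟨z, hz, rfl⟩
    rw [unitDisk, mem_ball_zero_iff] at hz
    have hz1 : (1 : ℂ) - z ≠ 0 := by
      intro h; have : z = 1 := by linear_combination -h
      rw [this] at hz; norm_num at hz
    have hN : 0 < Complex.normSq (1 - z) := Complex.normSq_pos.mpr hz1
    have hsq : Complex.normSq z < 1 := by
      have : ‖z‖ ^ 2 < 1 := by nlinarith [norm_nonneg z]
      rwa [Complex.sq_norm] at this
    simp only [Set.mem_setOf_eq, Complex.inv_re]
    rw [lt_div_iff₀ hN]
    have h1 : Complex.normSq (1 - z) = (1 - z.re)^2 + z.im^2 := by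
      simp [Complex.normSq_apply, Complex.sub_re, Complex.sub_im]; ring
    have h2 : Complex.normSq z = z.re^2 + z.im^2 := by rw [Complex.normSq_apply]; ring
    simp only [Complex.sub_re, Complex.one_re]
    nlinarith
  · intro hw
    simp only [Set.mem_setOf_eq] at hw
    have hw0 : w ≠ 0 := by
      intro h; rw [h] at hw; simp at hw; linarith
    refine ⟨1 - w⁻¹, ?_, by field_simp; ring⟩
    rw [unitDisk, mem_ball_zero_iff]
    have hNw : 0 < Complex.normSq w := Complex.normSq_pos.mpr hw0
    have key : Complex.normSq (1 - w⁻¹) < 1 := by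
      have h1 : (1 : ℂ) - w⁻¹ = (w - 1) / w := by field_simp
      rw [h1, Complex.normSq_div, div_lt_one hNw]
      have h2 : Complex.normSq (w - 1) = (w.re - 1)^2 + w.im^2 := by
        simp [Complex.normSq_apply, Complex.sub_re, Complex.sub_im]; ring
      have h3 : Complex.normSq w = w.re^2 + w.im^2 := by rw [Complex.normSq_apply]; ring
      nlinarith
    have := Complex.sq_norm (1 - w⁻¹)
    nlinarith [norm_nonneg (1 - w⁻¹)]

theorem bohr_radius_quasiconformal_convex_sharp
    (k : ℝ) (hk : k ∈ Set.Ico (0 : ℝ) 1) (lam : ℂ) (hlam : ‖lam‖ < 1)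
    (φ g : ℂ → ℂ) (a b : ℕ → ℂ)
    (hφ : ∀ z : ℂ, φ z = (1 - z)⁻¹)
    (hg : ∀ z : ℂ, g z = (k : ℂ) * lam * z * (1 - z)⁻¹)
    (ha : ∀ n : ℕ, a n = 1)
    (hb0 : b 0 = 0) (hb : ∀ n : ℕ, 1 ≤ n → b n = (k : ℂ) * lam) :
    Set.InjOn φ unitDisk ∧ Convex ℝ (φ '' unitDisk) ∧
    Subordinate φ φ ∧
    (∀ z ∈ unitDisk, HasSum (fun n : ℕ => a n * z ^ n) (φ z)) ∧
    (∀ z ∈ unitDisk, HasSum (fun n : ℕ => b n * z ^ n) (g z)) ∧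
    (∀ z ∈ unitDisk, ‖deriv g z‖ ≤ k * ‖deriv φ z‖) ∧
    Metric.infDist (φ 0) (frontier (φ '' unitDisk)) = 1 / 2 ∧
    (∀ r : ℝ, r ∈ Set.Ioo (0 : ℝ) 1 →
      ∑' n : ℕ, (‖a (n + 1)‖ + ‖b (n + 1)‖) * r ^ (n + 1)
        = (1 + k * ‖lam‖) * r / (1 - r)) ∧
    (∀ r : ℝ, 1 / (3 + 2 * k * ‖lam‖) < r → r < 1 →
      1 / 2 < ∑' n : ℕ, (‖a (n + 1)‖ + ‖b (n + 1)‖) * r ^ (n + 1)) := by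
  obtain ⟨hk0, hk1⟩ := hk
  have hφf : φ = fun z : ℂ => (1 - z)⁻¹ := funext hφ
  have hgf : g = fun z : ℂ => (k : ℂ) * lam * z * (1 - z)⁻¹ := funext hg
  subst hφf hgf
  have hne : ∀ z ∈ unitDisk, (1 : ℂ) - z ≠ 0 := by
    intro z hz h
    rw [unitDisk, mem_ball_zero_iff] at hz
    have : z = 1 := by linear_combination -h
    rw [this] at hz; norm_num at hz
  -- norm of kλ
  have hnkl : ‖(k : ℂ) * lam‖ = k * ‖lam‖ := by
    rw [norm_mul, Complex.norm_real, Real.norm_eq_abs, _root_.abs_of_nonneg hk0]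
  -- the tsum formula
  have key : ∀ r : ℝ, r ∈ Set.Ioo (0 : ℝ) 1 →
      ∑' n : ℕ, (‖a (n + 1)‖ + ‖b (n + 1)‖) * r ^ (n + 1)
        = (1 + k * ‖lam‖) * r / (1 - r) := by
    intro r ⟨hr0, hr1⟩
    have heq : (fun n : ℕ => (‖a (n + 1)‖ + ‖b (n + 1)‖) * r ^ (n + 1))
        = fun n : ℕ => ((1 + k * ‖lam‖) * r) * r ^ n := by
      funext n
      rw [ha, hb (n + 1) (Nat.le_add_left 1 n), hnkl, pow_succ]
      simp; ring
    rw [heq, tsum_mul_left, tsum_geometric_of_lt_one hr0.le hr1]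
    field_simp
  refine ⟨?_, ?_, ?_, ?_, ?_, ?_, ?_, key, ?_⟩
  · -- InjOn
    intro z hz w hw h
    have h1 := hne z hz
    have h2 := hne w hw
    have : (1 : ℂ) - z = 1 - w := by
      have := inv_injective h
      exact this
    linear_combination -this
  · rw [aux_image_eq]
    exact convex_halfSpace_re_gt (1/2)
  · exact ⟨id, analyticOnNhd_id, rfl, Set.mapsTo_id _, fun z _ => rfl⟩
  · intro z hz
    rw [unitDisk, mem_ball_zero_iff] at hz
    have := hasSum_geometric_of_norm_lt_one hz
    simpa [ha] using this
  · intro z hz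
    rw [unitDisk, mem_ball_zero_iff] at hz
    have hgeo := hasSum_geometric_of_norm_lt_one hz
    have h2 := hgeo.mul_left ((k : ℂ) * lam * z)
    have h3 : HasSum (fun n : ℕ => b (n + 1) * z ^ (n + 1)) ((k : ℂ) * lam * z * (1 - z)⁻¹) := by
      have heq : (fun n : ℕ => b (n + 1) * z ^ (n + 1))
          = fun n : ℕ => (k : ℂ) * lam * z * z ^ n := by
        funext n
        rw [hb (n + 1) (Nat.le_add_left 1 n), pow_succ]
        ring
      rw [heq]; exact h2
    have h4 := (hasSum_nat_add_iff (f := fun n : ℕ => b n * z ^ n) 1).mp h3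
    simpa [hb0] using h4
  · -- deriv bound
    intro z hz
    have hball : Metric.ball (0:ℂ) 1 ∈ nhds z := (Metric.isOpen_ball).mem_nhds hz
    have hev : (fun w : ℂ => (k : ℂ) * lam * w * (1 - w)⁻¹)
        =ᶠ[nhds z] fun w : ℂ => (k : ℂ) * lam * ((1 - w)⁻¹ - 1) := by
      filter_upwards [hball] with w hw
      have h1 := hne w hw
      field_simp; ring
    have hd : deriv (fun w : ℂ => (k : ℂ) * lam * w * (1 - w)⁻¹) z
        = (k : ℂ) * lam * deriv (fun w : ℂ => (1 - w)⁻¹) z := by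
      rw [hev.deriv_eq]
      have : (fun w : ℂ => (k : ℂ) * lam * ((1 - w)⁻¹ - 1))
          = fun w : ℂ => (k : ℂ) * lam * ((fun u : ℂ => (1 - u)⁻¹) w - 1) := rfl
      rw [this, deriv_const_mul_field, deriv_sub_const]
    rw [hd, norm_mul, hnkl]
    have h0 : (0:ℝ) ≤ ‖deriv (fun w : ℂ => (1 - w)⁻¹) z‖ := norm_nonneg _
    nlinarith [mul_nonneg (mul_nonneg hk0 h0) (sub_nonneg.mpr hlam.le)]
  · -- infDist
    rw [aux_image_eq]
    have hfr : frontier {w : ℂ | 1/2 < w.re} = {w : ℂ | w.re = 1/2} := by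
      have : {w : ℂ | 1/2 < w.re} = Complex.re ⁻¹' Set.Ioi (1/2) := rfl
      rw [this, Complex.frontier_preimage_re, frontier_Ioi]
      ext w; simp [eq_comm]
    rw [hfr]
    have h0 : (fun z : ℂ => (1 - z)⁻¹) 0 = 1 := by norm_num
    rw [h0]
    apply le_antisymm
    · have hmem : ((1/2 : ℝ) : ℂ) ∈ {w : ℂ | w.re = 1/2} := by simp
      calc Metric.infDist (1:ℂ) {w : ℂ | w.re = 1/2} ≤ dist (1:ℂ) ((1/2 : ℝ) : ℂ) :=
            Metric.infDist_le_dist_of_mem hmem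
        _ = 1/2 := by
          rw [Complex.dist_eq]
          have : (1 : ℂ) - ((1/2 : ℝ) : ℂ) = ((1/2 : ℝ) : ℂ) := by push_cast; ring
          rw [this, Complex.norm_real]
          norm_num
    · by_contra hlt
      push_neg at hlt
      have hne' : ({w : ℂ | w.re = 1/2} : Set ℂ).Nonempty := ⟨((1/2 : ℝ) : ℂ), by simp⟩
      rw [Metric.infDist_lt_iff hne'] at hlt
      obtain ⟨y, hy, hd2⟩ := hlt
      simp only [Set.mem_setOf_eq] at hy
      have : |((1:ℂ) - y).re| ≤ dist (1:ℂ) y := by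
        rw [Complex.dist_eq]
        exact Complex.abs_re_le_norm _
      rw [Complex.sub_re, Complex.one_re, hy] at this
      rw [show |(1 - 1/2 : ℝ)| = 1/2 from by norm_num] at this
      linarith
  · -- final inequality
    intro r h1 h2
    have hc : 0 ≤ k * ‖lam‖ := mul_nonneg hk0 (norm_nonneg _)
    have hden : 0 < 3 + 2 * k * ‖lam‖ := by linarith
    have hr0 : 0 < r := lt_trans (by positivity) h1
    rw [key r ⟨hr0, h2⟩]
    rw [lt_div_iff₀ (by linarith : (0:ℝ) < 1 - r)]
    rw [div_lt_iff₀ hden] at h1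
    nlinarith

end
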